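/- Let (A, A*) be a Leonard pair on a (d+1)-dimensional K-vector space with d ≥ 3, A-eigenvalues θ_0, ..., θ_d and A*-eigenvalues θ*_0, ..., θ*_d (ordered as in the standard Leonard-pair setup), and suppose β, γ, γ*, ϱ, ϱ* ∈ K satisfy the tridiagonal relations. Then the expressions (θ_{i−2} − θ_{i+1})/(θ_{i−1} − θ_i) and (θ*_{i−2} − θ*_{i+1})/(θ*_{i−1} − θ*_i) are both equal to β + 1 for all 2 ≤ i ≤ d−1. -/

import Mathlib

/-- A square matrix is irreducible tridiagonal: nonzero entries lie within
distance one of the diagonal, and all sub- and superdiagonal entries are nonzero. -/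
def IsIrreducibleTridiagonal {K : Type*} [Field K] {n : ℕ}
    (M : Matrix (Fin n) (Fin n) K) : Prop :=
  (∀ i j : Fin n, ((i : ℕ) + 1 < j ∨ (j : ℕ) + 1 < i) → M i j = 0) ∧
  (∀ i j : Fin n, ((i : ℕ) + 1 = j ∨ (j : ℕ) + 1 = i) → M i j ≠ 0)

/-- The tridiagonal relations for the pair `(A, B)` with parameters `β, γ, γ*, ϱ, ϱ*`. -/
def TridiagonalRelations {K V : Type*} [Field K] [AddCommGroup V] [Module K V]
    (A B : Module.End K V) (β γ γs ϱ ϱs : K) : Prop :=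
  (A * (A ^ 2 * B - β • (A * B * A) + B * A ^ 2 - γ • (A * B + B * A) - ϱ • B) =
    (A ^ 2 * B - β • (A * B * A) + B * A ^ 2 - γ • (A * B + B * A) - ϱ • B) * A) ∧
  (B * (B ^ 2 * A - β • (B * A * B) + A * B ^ 2 - γs • (B * A + A * B) - ϱs • A) =
    (B ^ 2 * A - β • (B * A * B) + A * B ^ 2 - γs • (B * A + A * B) - ϱs • A) * B)

namespace LP15

variable {K : Type*} [Field K] {n : ℕ}

def Band1 (X : Matrix (Fin n) (Fin n) K) : Prop :=
  ∀ a b : Fin n, ((a : ℕ) + 1 < b ∨ (b : ℕ) + 1 < a) → X a b = 0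

lemma mul_diag_apply {M X : Matrix (Fin n) (Fin n) K} (hM : M.IsDiag) (a b : Fin n) :
    (X * M) a b = X a b * M b b := by
  rw [Matrix.mul_apply]
  exact Finset.sum_eq_single b (fun l _ hl => by rw [hM hl, mul_zero]) (by simp)

lemma diag_mul_apply {M X : Matrix (Fin n) (Fin n) K} (hM : M.IsDiag) (a b : Fin n) :
    (M * X) a b = M a a * X a b := by
  rw [Matrix.mul_apply]
  exact Finset.sum_eq_single a (fun l _ hl => by rw [hM (Ne.symm hl), zero_mul]) (by simp)

lemma band1_mul_diag {M X : Matrix (Fin n) (Fin n) K} (hM : M.IsDiag) (hX : Band1 X) :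
    Band1 (X * M) := by
  intro a b h
  rw [mul_diag_apply hM, hX a b h, zero_mul]

lemma band1_mul_zero {X Y : Matrix (Fin n) (Fin n) K} (hX : Band1 X) (hY : Band1 Y)
    (k j : Fin n) (h : (k : ℕ) + 2 < j) : (X * Y) k j = 0 := by
  rw [Matrix.mul_apply]
  apply Finset.sum_eq_zero
  intro l _
  rcases lt_or_ge ((k : ℕ) + 1) (l : ℕ) with hl | hl
  · rw [hX k l (Or.inl hl), zero_mul]
  · rw [hY l j (Or.inl (by omega)), mul_zero]

lemma band1_mul_two {X Y : Matrix (Fin n) (Fin n) K} (hX : Band1 X) (hY : Band1 Y)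
    (k m j : Fin n) (hm : (m : ℕ) = k + 1) (hj : (j : ℕ) = k + 2) :
    (X * Y) k j = X k m * Y m j := by
  rw [Matrix.mul_apply]
  apply Finset.sum_eq_single m
  · intro l _ hl
    have hl' : (l : ℕ) ≠ (m : ℕ) := fun h => hl (Fin.ext h)
    rcases lt_or_ge ((k : ℕ) + 1) (l : ℕ) with h | h
    · rw [hX k l (Or.inl h), zero_mul]
    · rw [hY l j (Or.inl (by omega)), mul_zero]
  · simp

lemma key (M N : Matrix (Fin n) (Fin n) K) (hM : M.IsDiag) (hN : IsIrreducibleTridiagonal N)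
    (β γ ϱ : K)
    (hcomm : N * (N * N * M - β • (N * M * N) + M * (N * N) - γ • (N * M + M * N) - ϱ • M) =
      (N * N * M - β • (N * M * N) + M * (N * N) - γ • (N * M + M * N) - ϱ • M) * N)
    (i j₁ j₂ j₃ : Fin n) (h1 : (j₁ : ℕ) = i + 1) (h2 : (j₂ : ℕ) = i + 2)
    (h3 : (j₃ : ℕ) = i + 3) :
    M j₃ j₃ + M j₁ j₁ - β * M j₂ j₂ = M j₂ j₂ + M i i - β * M j₁ j₁ := by
  obtain ⟨hNz, hNnz⟩ := hN
  have hNb : Band1 N := hNz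
  set D := N * N * M - β • (N * M * N) + M * (N * N) - γ • (N * M + M * N) - ϱ • M with hD
  have hDz : ∀ k j : Fin n, (k : ℕ) + 2 < j → D k j = 0 := by
    intro k j h
    have h1' : (k : ℕ) + 1 < j := by omega
    have hkj : k ≠ j := fun he => by subst he; omega
    simp only [hD, Matrix.sub_apply, Matrix.add_apply, Matrix.smul_apply, smul_eq_mul]
    rw [mul_diag_apply (X := N * N) hM, diag_mul_apply (X := N * N) hM,
        mul_diag_apply (X := N) hM, diag_mul_apply (X := N) hM,
        band1_mul_zero hNb hNb k j h,
        band1_mul_zero (band1_mul_diag hM hNb) hNb k j h,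
        hNb k j (Or.inl h1'), hM hkj]
    ring
  have hD2 : ∀ k m j : Fin n, (m : ℕ) = k + 1 → (j : ℕ) = k + 2 →
      D k j = N k m * N m j * (M j j + M k k - β * M m m) := by
    intro k m j hm hj
    have hkj1 : (k : ℕ) + 1 < j := by omega
    have hkj : k ≠ j := fun he => by subst he; omega
    simp only [hD, Matrix.sub_apply, Matrix.add_apply, Matrix.smul_apply, smul_eq_mul]
    rw [mul_diag_apply (X := N * N) hM, diag_mul_apply (X := N * N) hM,
        band1_mul_two hNb hNb k m j hm hj,
        band1_mul_two (band1_mul_diag hM hNb) hNb k m j hm hj,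
        mul_diag_apply (X := N) hM k m, mul_diag_apply (X := N) hM k j,
        diag_mul_apply (X := N) hM k j,
        hNb k j (Or.inl hkj1), hM hkj]
    ring
  have hcD : ∀ a c : Fin n, (N * D) a c = (D * N) a c := fun a c => by rw [hcomm]
  have e1 : (N * D) i j₃ = N i j₁ * D j₁ j₃ := by
    rw [Matrix.mul_apply]
    apply Finset.sum_eq_single j₁
    · intro l _ hl
      have hl' : (l : ℕ) ≠ (j₁ : ℕ) := fun h => hl (Fin.ext h)
      rcases lt_or_ge ((i : ℕ) + 1) (l : ℕ) with h | h
      · rw [hNz i l (Or.inl h), zero_mul]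
      · rw [hDz l j₃ (by omega), mul_zero]
    · simp
  have e2 : (D * N) i j₃ = D i j₂ * N j₂ j₃ := by
    rw [Matrix.mul_apply]
    apply Finset.sum_eq_single j₂
    · intro l _ hl
      have hl' : (l : ℕ) ≠ (j₂ : ℕ) := fun h => hl (Fin.ext h)
      rcases lt_or_ge ((l : ℕ)) ((i : ℕ) + 2) with h | h
      · rw [hNz l j₃ (Or.inl (by omega)), mul_zero]
      · rw [hDz i l (by omega), zero_mul]
    · simp
  have key0 : N i j₁ * (N j₁ j₂ * N j₂ j₃ * (M j₃ j₃ + M j₁ j₁ - β * M j₂ j₂)) =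
      N i j₁ * N j₁ j₂ * (M j₂ j₂ + M i i - β * M j₁ j₁) * N j₂ j₃ := by
    rw [← hD2 j₁ j₂ j₃ (by omega) (by omega), ← hD2 i j₁ j₂ h1 h2, ← e1, ← e2]
    exact hcD i j₃
  have n1 : N i j₁ ≠ 0 := hNnz i j₁ (Or.inl h1.symm)
  have n2 : N j₁ j₂ ≠ 0 := hNnz j₁ j₂ (Or.inl (by omega))
  have n3 : N j₂ j₃ ≠ 0 := hNnz j₂ j₃ (Or.inl (by omega))
  have hzero : (N i j₁ * N j₁ j₂ * N j₂ j₃) *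
      ((M j₃ j₃ + M j₁ j₁ - β * M j₂ j₂) - (M j₂ j₂ + M i i - β * M j₁ j₁)) = 0 := by
    linear_combination key0
  have hne : N i j₁ * N j₁ j₂ * N j₂ j₃ ≠ 0 := mul_ne_zero (mul_ne_zero n1 n2) n3
  have h0 := (mul_eq_zero.mp hzero).resolve_left hne
  linear_combination h0

lemma eig_zero {m : ℕ} (N : Matrix (Fin (m + 1)) (Fin (m + 1)) K)
    (hN : IsIrreducibleTridiagonal N) (t : K) (x : Fin (m + 1) → K)
    (hx : N.mulVec x = t • x) (h0 : x 0 = 0) : x = 0 := by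
  obtain ⟨hNz, hNnz⟩ := hN
  have main : ∀ k : ℕ, ∀ h : k < m + 1, x ⟨k, h⟩ = 0 := by
    intro k
    induction k using Nat.strong_induction_on with
    | _ k ih =>
      intro h
      match k, h with
      | 0, h => exact h0
      | (k + 1), h =>
        have hk : k < m + 1 := by omega
        have hrow := congrFun hx ⟨k, hk⟩
        have hsum : N.mulVec x ⟨k, hk⟩ = ∑ j, N ⟨k, hk⟩ j * x j := by
          simp [Matrix.mulVec, dotProduct]
        have hxk : x ⟨k, hk⟩ = 0 := ih k (by omega) hk
        have hone : ∑ j, N ⟨k, hk⟩ j * x j = N ⟨k, hk⟩ ⟨k + 1, h⟩ * x ⟨k + 1, h⟩ := by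
          apply Finset.sum_eq_single (⟨k + 1, h⟩ : Fin (m + 1))
          · intro l _ hl
            have hl' : (l : ℕ) ≠ k + 1 := fun he => hl (Fin.ext he)
            rcases lt_or_ge (k + 1) (l : ℕ) with hc | hc
            · rw [hNz ⟨k, hk⟩ l (Or.inl hc), zero_mul]
            · have : x l = 0 := ih (l : ℕ) (by omega) l.isLt
              rw [this, mul_zero]
          · simp
        have : N ⟨k, hk⟩ ⟨k + 1, h⟩ * x ⟨k + 1, h⟩ = 0 := by
          rw [← hone, ← hsum, hrow, Pi.smul_apply, smul_eq_mul, hxk, mul_zero]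
        exact (mul_eq_zero.mp this).resolve_left
          (hNnz ⟨k, hk⟩ ⟨k + 1, h⟩ (Or.inl rfl))
  funext j
  exact main (j : ℕ) j.isLt

end LP15

namespace LP15

lemma diag_entries_injective {K : Type*} [Field K] {d : ℕ} {V : Type*} [AddCommGroup V]
    [Module K V]
    (A : Module.End K V) (b c : Module.Basis (Fin (d + 1)) K V)
    (hAtri : IsIrreducibleTridiagonal (LinearMap.toMatrix b b A))
    (hAdiag : (LinearMap.toMatrix c c A).IsDiag) :
    Function.Injective (fun i => LinearMap.toMatrix c c A i i) := by
  intro i j hij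
  by_contra hne
  simp only at hij
  set t := LinearMap.toMatrix c c A i i with ht
  have heig : ∀ k : Fin (d + 1), LinearMap.toMatrix c c A k k = t → A (c k) = t • (c k) := by
    intro k hk
    apply c.repr.injective
    ext l
    rw [map_smul]
    have h1 : c.repr (A (c k)) l = LinearMap.toMatrix c c A l k :=
      (LinearMap.toMatrix_apply c c A l k).symm
    by_cases h : l = k
    · subst h
      simp [h1, hk, Module.Basis.repr_self]
    · rw [h1, hAdiag h]
      simp [Module.Basis.repr_self, Finsupp.single_apply, Ne.symm h]
  have hu : A (c i) = t • c i := heig i rfl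
  have hw : A (c j) = t • c j := heig j hij.symm
  set x : Fin (d + 1) → K := ⇑(b.repr (c i)) with hxdef
  set y : Fin (d + 1) → K := ⇑(b.repr (c j)) with hydef
  have hx : (LinearMap.toMatrix b b A).mulVec x = t • x := by
    rw [hxdef, LinearMap.toMatrix_mulVec_repr, hu, map_smul]
    rfl
  have hy : (LinearMap.toMatrix b b A).mulVec y = t • y := by
    rw [hydef, LinearMap.toMatrix_mulVec_repr, hw, map_smul]
    rfl
  have hz : (LinearMap.toMatrix b b A).mulVec (x 0 • y - y 0 • x) =
      t • (x 0 • y - y 0 • x) := by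
    rw [Matrix.mulVec_sub, Matrix.mulVec_smul, Matrix.mulVec_smul, hx, hy]
    module
  have hz0 : (x 0 • y - y 0 • x) 0 = 0 := by
    simp [mul_comm]
  have hzz : x 0 • y - y 0 • x = 0 := eig_zero _ hAtri t _ hz hz0
  have hvec : x 0 • c j - y 0 • c i = 0 := by
    apply b.repr.injective
    rw [map_sub, map_smul, map_smul, map_zero]
    ext l
    have := congrFun hzz l
    simpa using this
  have hx0 : x 0 = 0 := by
    have := congrArg (fun v => c.repr v j) hvec
    simpa [Module.Basis.repr_self, Finsupp.single_apply, hne, Ne.symm hne] using this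
  have hxz : x = 0 := eig_zero _ hAtri t x hx (by rw [hx0])
  have : c i = 0 := by
    apply b.repr.injective
    rw [map_zero]
    ext l
    exact congrFun hxz l
  exact c.ne_zero i this

end LP15

theorem stmt_15 {K V : Type*} [Field K] [AddCommGroup V] [Module K V]
    (d : ℕ) (hd3 : 3 ≤ d) (A B : Module.End K V)
    (b : Module.Basis (Fin (d + 1)) K V)
    (hAtri : IsIrreducibleTridiagonal (LinearMap.toMatrix b b A))
    (hBdiag : (LinearMap.toMatrix b b B).IsDiag)
    (c : Module.Basis (Fin (d + 1)) K V)
    (hBtri : IsIrreducibleTridiagonal (LinearMap.toMatrix c c B))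
    (hAdiag : (LinearMap.toMatrix c c A).IsDiag)
    (θ : Fin (d + 1) → K) (hθ : ∀ i, θ i = LinearMap.toMatrix c c A i i)
    (θs : Fin (d + 1) → K) (hθs : ∀ i, θs i = LinearMap.toMatrix b b B i i)
    (β γ γs ϱ ϱs : K)
    (hrel : TridiagonalRelations A B β γ γs ϱ ϱs) :
    ∀ i : ℕ, (h1 : 2 ≤ i) → (h2 : i + 1 ≤ d) →
      (θ ⟨i - 2, by omega⟩ - θ ⟨i + 1, by omega⟩) /
        (θ ⟨i - 1, by omega⟩ - θ ⟨i, by omega⟩) = β + 1 ∧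
      (θs ⟨i - 2, by omega⟩ - θs ⟨i + 1, by omega⟩) /
        (θs ⟨i - 1, by omega⟩ - θs ⟨i, by omega⟩) = β + 1 := by
  intro i hi1 hi2
  obtain ⟨hr1, hr2⟩ := hrel
  rw [pow_two] at hr1 hr2
  -- transport to matrices
  have hm1 := congrArg (LinearMap.toMatrix b b) hr1
  have hm2 := congrArg (LinearMap.toMatrix c c) hr2
  simp only [map_sub, map_add, map_smul, LinearMap.toMatrix_mul] at hm1 hm2
  set NA := LinearMap.toMatrix b b A with hNA
  set MB := LinearMap.toMatrix b b B with hMB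
  set NB := LinearMap.toMatrix c c B with hNB
  set MA := LinearMap.toMatrix c c A with hMA
  -- Fin indices
  have hlt0 : i - 2 < d + 1 := by omega
  have hlt1 : i - 1 < d + 1 := by omega
  have hlt2 : i < d + 1 := by omega
  have hlt3 : i + 1 < d + 1 := by omega
  set k0 : Fin (d + 1) := ⟨i - 2, hlt0⟩
  set k1 : Fin (d + 1) := ⟨i - 1, hlt1⟩
  set k2 : Fin (d + 1) := ⟨i, hlt2⟩
  set k3 : Fin (d + 1) := ⟨i + 1, hlt3⟩
  have e1 : (k1 : ℕ) = k0 + 1 := by simp [k0, k1]; omega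
  have e2 : (k2 : ℕ) = k0 + 2 := by simp [k0, k2]; omega
  have e3 : (k3 : ℕ) = k0 + 3 := by simp [k0, k3]; omega
  -- recurrences
  have recθ : MA k3 k3 + MA k1 k1 - β * MA k2 k2 = MA k2 k2 + MA k0 k0 - β * MA k1 k1 :=
    LP15.key MA NB hAdiag hBtri β γs ϱs hm2 k0 k1 k2 k3 e1 e2 e3
  have recθs : MB k3 k3 + MB k1 k1 - β * MB k2 k2 = MB k2 k2 + MB k0 k0 - β * MB k1 k1 :=
    LP15.key MB NA hBdiag hAtri β γ ϱ hm1 k0 k1 k2 k3 e1 e2 e3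
  -- distinctness
  have hk12 : k1 ≠ k2 := by
    intro h
    have := congrArg (fun x : Fin (d + 1) => (x : ℕ)) h
    simp [k1, k2] at this
    omega
  have hθne : θ k1 - θ k2 ≠ 0 := by
    rw [sub_ne_zero, hθ, hθ]
    exact fun h => hk12 (LP15.diag_entries_injective A b c hAtri hAdiag h)
  have hθsne : θs k1 - θs k2 ≠ 0 := by
    rw [sub_ne_zero, hθs, hθs]
    exact fun h => hk12 (LP15.diag_entries_injective B c b hBtri hBdiag h)
  constructor
  · rw [div_eq_iff hθne, hθ, hθ, hθ, hθ]
    linear_combination -recθ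
  · rw [div_eq_iff hθsne, hθs, hθs, hθs, hθs]
    linear_combination -recθs
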